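/- For every closed finite trace π over U and every finite-state Markov chain M over U, L(M,π) ≤ L(M_π,π). That is, the chain M_π induced by π has maximal likelihood of generating π among all finite-state Markov chains over U. -/

import Mathlib

open Finset

/-- A finite-state Markov chain over the state universe `U`: a finite nonempty
set `S` of states, a transition probability matrix `P` supported in `S × S`
whose rows (indexed by states of `S`) sum to `1`, and an initial probability
distribution `μ` supported in `S`. -/
structure FinMC (U : Type*) where
  S : Finset U
  S_ne : S.Nonempty
  P : U → U → ℝ
  P_nonneg : ∀ a b, 0 ≤ P a b
  P_le_one : ∀ a b, P a b ≤ 1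
  P_zero : ∀ a b, a ∉ S ∨ b ∉ S → P a b = 0
  P_row : ∀ a ∈ S, ∑ b ∈ S, P a b = 1
  μ : U → ℝ
  μ_nonneg : ∀ a, 0 ≤ μ a
  μ_zero : ∀ a, a ∉ S → μ a = 0
  μ_sum : ∑ a ∈ S, μ a = 1

/-- The likelihood `L(M, π) = μ(r 0) · ∏_{i=1}^{n} P(r (i-1), r i)` that the
chain `M` generates the finite trace `π = r 0 ⋯ r n`. -/
def FinMC.lik {U : Type*} (M : FinMC U) (r : ℕ → U) (n : ℕ) : ℝ :=
  M.μ (r 0) * ∏ i ∈ range n, M.P (r i) (r (i + 1))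

/-- `traceT r n a b` is the number of indices `0 ≤ i ≤ n - 1` with
`r i = a` and `r (i+1) = b`, i.e. the number of occurrences of the
transition `(a, b)` in the trace `r 0 ⋯ r n`. -/
def traceT {U : Type*} [DecidableEq U] (r : ℕ → U) (n : ℕ) (a b : U) : ℕ :=
  ((range n).filter (fun i => r i = a ∧ r (i + 1) = b)).card

/-- The set of states `{r 0, …, r n}` occurring in the trace `r 0 ⋯ r n`. -/
def traceStates {U : Type*} [DecidableEq U] (r : ℕ → U) (n : ℕ) : Finset U :=
  (range (n + 1)).image r

/-- The empirical transition matrix of the trace `r 0 ⋯ r n`: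
`P_π(a, b) = T_π(a, b) / ∑_{c} T_π(a, c)`. -/
noncomputable def traceP {U : Type*} [DecidableEq U] (r : ℕ → U) (n : ℕ) (a b : U) : ℝ :=
  (traceT r n a b : ℝ) / ∑ c ∈ traceStates r n, (traceT r n a c : ℝ)

/-- The likelihood `L(M_π, π)` that the induced chain `M_π` generates `π`
(the initial distribution of `M_π` gives probability 1 to `r 0`). -/
noncomputable def traceLik {U : Type*} [DecidableEq U] (r : ℕ → U) (n : ℕ) : ℝ :=
  ∏ i ∈ range n, traceP r n (r i) (r (i + 1))

/-- For every closed finite trace `π = r 0 ⋯ r n` and every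
finite-state Markov chain `M` over `U`, `L(M, π) ≤ L(M_π, π)`: the chain `M_π`
induced by `π` has maximal likelihood of generating `π`. -/

lemma gibbs {ι : Type*} [DecidableEq ι] (s : Finset ι) (p : ι → ℝ) (t : ι → ℕ)
    (hp : ∀ b ∈ s, 0 ≤ p b) (hps : ∑ b ∈ s, p b ≤ 1) :
    ∏ b ∈ s, p b ^ t b ≤ ∏ b ∈ s, ((t b : ℝ) / (∑ c ∈ s, (t c : ℝ))) ^ t b := by
  set T : ℝ := ∑ c ∈ s, (t c : ℝ) with hT
  by_cases hT0 : T = 0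
  · have hz : ∀ b ∈ s, t b = 0 := by
      intro b hb
      have := (Finset.sum_eq_zero_iff_of_nonneg (fun c _ => by positivity)).1 hT0 b hb
      exact_mod_cast this
    apply le_of_eq
    refine Finset.prod_congr rfl fun b hb => ?_
    rw [hz b hb, pow_zero, pow_zero]
  · have hTpos : 0 < T := lt_of_le_of_ne (Finset.sum_nonneg fun c _ => by positivity) (Ne.symm hT0)
    set s' : Finset ι := s.filter (fun b => t b ≠ 0) with hs'
    have hsub : s' ⊆ s := Finset.filter_subset _ _
    have hmem : ∀ b ∈ s', t b ≠ 0 := fun b hb => (Finset.mem_filter.1 hb).2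
    -- restrict both products to s'
    have hrestr : ∀ f : ι → ℝ, ∏ b ∈ s, f b ^ t b = ∏ b ∈ s', f b ^ t b := by
      intro f
      refine (Finset.prod_subset hsub fun b hb hb' => ?_).symm
      have : t b = 0 := by
        by_contra h
        exact hb' (Finset.mem_filter.2 ⟨hb, h⟩)
      rw [this, pow_zero]
    have hTs' : ∑ c ∈ s', (t c : ℝ) = T := by
      refine Finset.sum_subset hsub fun b hb hb' => ?_
      have : t b = 0 := by
        by_contra h
        exact hb' (Finset.mem_filter.2 ⟨hb, h⟩)
      rw [this, Nat.cast_zero]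
    set w : ι → ℝ := fun b => (t b : ℝ) / T with hwdef
    set z : ι → ℝ := fun b => p b * T / (t b : ℝ) with hzdef
    have hw : ∀ b ∈ s', 0 ≤ w b := fun b _ => by positivity
    have hw1 : ∑ b ∈ s', w b = 1 := by
      rw [hwdef]; simp only [← Finset.sum_div, hTs', div_self hT0]
    have hz : ∀ b ∈ s', 0 ≤ z b := fun b hb => by
      have := hp b (hsub hb)
      positivity
    have hgm := Real.geom_mean_le_arith_mean_weighted s' w z hw hw1 hz
    have hsum : ∑ b ∈ s', w b * z b ≤ 1 := by
      have : ∀ b ∈ s', w b * z b = p b := by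
        intro b hb
        have ht : (t b : ℝ) ≠ 0 := Nat.cast_ne_zero.2 (hmem b hb)
        show (t b : ℝ) / T * (p b * T / (t b : ℝ)) = p b
        rw [div_mul_div_comm, div_eq_iff (mul_ne_zero hT0 ht)]
        ring
      rw [Finset.sum_congr rfl this]
      exact le_trans (Finset.sum_le_sum_of_subset_of_nonneg hsub fun b hb _ => hp b hb) hps
    have hX1 : ∏ b ∈ s', z b ^ w b ≤ 1 := le_trans hgm hsum
    have hXnn : 0 ≤ ∏ b ∈ s', z b ^ w b :=
      Finset.prod_nonneg fun b hb => Real.rpow_nonneg (hz b hb) _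
    -- natural number N with (N : ℝ) = T
    obtain ⟨N, hN⟩ : ∃ N : ℕ, (N : ℝ) = T := ⟨∑ c ∈ s, t c, by rw [hT]; push_cast; rfl⟩
    have hpowN : (∏ b ∈ s', z b ^ w b) ^ N ≤ 1 := pow_le_one₀ hXnn hX1
    have hpow_eq : (∏ b ∈ s', z b ^ w b) ^ N = ∏ b ∈ s', z b ^ t b := by
      rw [← Finset.prod_pow]
      refine Finset.prod_congr rfl fun b hb => ?_
      rw [← Real.rpow_natCast (z b ^ w b) N, ← Real.rpow_mul (hz b hb), hN]
      have : w b * T = (t b : ℝ) := by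
        rw [hwdef]; field_simp
      rw [this, Real.rpow_natCast]
    rw [hpow_eq] at hpowN
    rw [hrestr p, hrestr (fun b => (t b : ℝ) / T)]
    have hfac : ∀ b ∈ s', p b ^ t b = ((t b : ℝ) / T) ^ t b * z b ^ t b := by
      intro b hb
      rw [← mul_pow]
      congr 1
      have ht : (t b : ℝ) ≠ 0 := Nat.cast_ne_zero.2 (hmem b hb)
      show p b = (t b : ℝ) / T * (p b * T / (t b : ℝ))
      rw [div_mul_div_comm, eq_div_iff (mul_ne_zero hT0 ht)]
      ring
    rw [Finset.prod_congr rfl hfac, Finset.prod_mul_distrib]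
    calc (∏ b ∈ s', ((t b:ℝ)/T) ^ t b) * ∏ b ∈ s', z b ^ t b
        ≤ (∏ b ∈ s', ((t b:ℝ)/T) ^ t b) * 1 := by
          refine mul_le_mul_of_nonneg_left hpowN ?_
          exact Finset.prod_nonneg fun b hb => by positivity
      _ = ∏ b ∈ s', ((t b:ℝ)/T) ^ t b := mul_one _


lemma regroup {U : Type*} [DecidableEq U] (r : ℕ → U) (n : ℕ) (f : U → U → ℝ) :
    ∏ i ∈ range n, f (r i) (r (i + 1)) =
      ∏ a ∈ traceStates r n, ∏ b ∈ traceStates r n, f a b ^ traceT r n a b := by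
  have hmaps : ∀ i ∈ range n, (r i, r (i + 1)) ∈ traceStates r n ×ˢ traceStates r n := by
    intro i hi
    rw [Finset.mem_range] at hi
    refine Finset.mem_product.2 ⟨?_, ?_⟩ <;>
      exact Finset.mem_image.2 ⟨_, Finset.mem_range.2 (by omega), rfl⟩
  rw [← Finset.prod_fiberwise_of_maps_to' hmaps (fun p => f p.1 p.2)]
  rw [Finset.prod_product]
  refine Finset.prod_congr rfl fun a _ => Finset.prod_congr rfl fun b _ => ?_
  rw [Finset.prod_const]
  congr 1
  unfold traceT
  congr 1
  ext i
  simp [Prod.ext_iff]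

theorem lik_le_traceLik {U : Type*} [DecidableEq U] (r : ℕ → U) (n : ℕ)
    (hclosed : ∃ i < n, r i = r n) (M : FinMC U) :
    M.lik r n ≤ traceLik r n := by
  have hμ : M.μ (r 0) ≤ 1 := by
    by_cases h : r 0 ∈ M.S
    · calc M.μ (r 0) ≤ ∑ a ∈ M.S, M.μ a :=
            Finset.single_le_sum (fun a _ => M.μ_nonneg a) h
        _ = 1 := M.μ_sum
    · rw [M.μ_zero _ h]; norm_num
  have key : ∀ a ∈ traceStates r n,
      ∏ b ∈ traceStates r n, M.P a b ^ traceT r n a b ≤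
      ∏ b ∈ traceStates r n, traceP r n a b ^ traceT r n a b := by
    intro a _
    have hrow : ∑ b ∈ traceStates r n, M.P a b ≤ 1 := by
      by_cases ha : a ∈ M.S
      · calc ∑ b ∈ traceStates r n, M.P a b
            ≤ ∑ b ∈ traceStates r n ∪ M.S, M.P a b :=
              Finset.sum_le_sum_of_subset_of_nonneg Finset.subset_union_left
                (fun b _ _ => M.P_nonneg a b)
          _ = ∑ b ∈ M.S, M.P a b := by
              refine (Finset.sum_subset Finset.subset_union_right fun b _ hb => ?_).symm
              exact M.P_zero a b (Or.inr hb)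
          _ = 1 := M.P_row a ha
      · have : ∀ b ∈ traceStates r n, M.P a b = 0 := fun b _ => M.P_zero a b (Or.inl ha)
        rw [Finset.sum_congr rfl this]
        simp
    have := gibbs (traceStates r n) (M.P a) (traceT r n a)
      (fun b _ => M.P_nonneg a b) hrow
    convert this using 1
    rfl
  rw [FinMC.lik, traceLik, regroup r n M.P, regroup r n (traceP r n)]
  calc M.μ (r 0) * ∏ a ∈ traceStates r n, ∏ b ∈ traceStates r n, M.P a b ^ traceT r n a b
      ≤ 1 * ∏ a ∈ traceStates r n, ∏ b ∈ traceStates r n, traceP r n a b ^ traceT r n a b := by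
        refine mul_le_mul hμ ?_ ?_ zero_le_one
        · exact Finset.prod_le_prod
            (fun a _ => Finset.prod_nonneg fun b _ => pow_nonneg (M.P_nonneg a b) _) key
        · exact Finset.prod_nonneg fun a _ =>
            Finset.prod_nonneg fun b _ => pow_nonneg (M.P_nonneg a b) _
    _ = _ := one_mul _
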